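/- Let X₀,…,X_T be real random variables such that for each t there are constants A ≥ 1 and B_t > 0 with P(|X_t| > ε) ≤ A·exp(−B_t ε) for all ε > 0. Let B be the harmonic mean of the B_t, i.e. B = ((T+1)^{-1} ∑_{t=0}^T B_t^{-1})^{-1}. Then for every 0 < γ < 1 and ε > 0, P(|∑_{t=0}^T X_t| > ε) ≤ (A/(1−γ))·exp(−γ B ε/(T+1)). -/

import Mathlib

open MeasureTheory ProbabilityTheory Real Finset
open scoped ENNReal NNReal




lemma moment_from_tail {Ω : Type*} [MeasurableSpace Ω] (μ : Measure Ω)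
    (Y : Ω → ℝ) (hY : Measurable Y) (A b : ℝ) (hA : 0 ≤ A) (hb : 0 < b)
    (htail : ∀ s : ℝ, 0 < s → μ {ω | s < |Y ω|} ≤ ENNReal.ofReal (A * Real.exp (-b * s)))
    (q : ℕ) (hq : 1 ≤ q) :
    ∫⁻ ω, ENNReal.ofReal (|Y ω| ^ (q : ℝ)) ∂μ ≤ ENNReal.ofReal (A * (Nat.factorial q : ℝ) / b ^ q) := by
  have hq0 : (0 : ℝ) < q := by exact_mod_cast hq
  rw [MeasureTheory.lintegral_rpow_eq_lintegral_meas_lt_mul μ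
    (Filter.Eventually.of_forall fun ω => abs_nonneg _) hY.abs.aemeasurable hq0]
  have key : ∫⁻ t in Set.Ioi (0:ℝ), μ {a | t < |Y a|} * ENNReal.ofReal (t ^ ((q:ℝ) - 1))
      ≤ ENNReal.ofReal (∫ t in Set.Ioi (0:ℝ), t ^ ((q:ℝ) - 1) * (A * Real.exp (-(b * t)))) := by
    have hint : IntegrableOn (fun t : ℝ => t ^ ((q:ℝ) - 1) * (A * Real.exp (-(b * t))))
        (Set.Ioi 0) := by
      have := (integrableOn_rpow_mul_exp_neg_mul_rpow (p := 1) (s := (q:ℝ) - 1) (b := b)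
        (by linarith) one_pos hb).const_mul A
      simp only [Real.rpow_one] at this
      have h2 : IntegrableOn (fun t : ℝ => A * (t ^ ((q:ℝ) - 1) * Real.exp (-b * t)))
          (Set.Ioi 0) := this
      refine h2.congr_fun (fun t ht => by ring) measurableSet_Ioi
    rw [MeasureTheory.ofReal_integral_eq_lintegral_ofReal hint ?nn]
    case nn =>
      filter_upwards [self_mem_ae_restrict (measurableSet_Ioi : MeasurableSet (Set.Ioi (0:ℝ)))]
        with t ht
      have : (0:ℝ) < t := ht
      positivity
    refine lintegral_mono_ae ?_
    filter_upwards [self_mem_ae_restrict (measurableSet_Ioi : MeasurableSet (Set.Ioi (0:ℝ)))]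
      with t ht
    have ht' : (0:ℝ) < t := ht
    calc μ {a | t < |Y a|} * ENNReal.ofReal (t ^ ((q:ℝ) - 1))
        ≤ ENNReal.ofReal (A * Real.exp (-b * t)) * ENNReal.ofReal (t ^ ((q:ℝ) - 1)) := by
          gcongr; exact htail t ht'
      _ = ENNReal.ofReal (t ^ ((q:ℝ) - 1) * (A * Real.exp (-(b * t)))) := by
          rw [← ENNReal.ofReal_mul (by positivity)]
          ring_nf
  calc ENNReal.ofReal (q:ℝ) * ∫⁻ t in Set.Ioi (0:ℝ), μ {a | t < |Y a|} * ENNReal.ofReal (t ^ ((q:ℝ) - 1))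
      ≤ ENNReal.ofReal (q:ℝ) *
        ENNReal.ofReal (∫ t in Set.Ioi (0:ℝ), t ^ ((q:ℝ) - 1) * (A * Real.exp (-(b * t)))) := by
        gcongr
    _ = ENNReal.ofReal (A * (Nat.factorial q : ℝ) / b ^ q) := by
        rw [← ENNReal.ofReal_mul (by positivity)]
        congr 1
        have : ∫ t in Set.Ioi (0:ℝ), t ^ ((q:ℝ) - 1) * (A * Real.exp (-(b * t)))
            = A * ((1 / b) ^ (q:ℝ) * Real.Gamma q) := by
          rw [show (fun t : ℝ => t ^ ((q:ℝ) - 1) * (A * Real.exp (-(b * t))))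
              = (fun t : ℝ => A * (t ^ ((q:ℝ) - 1) * Real.exp (-(b * t)))) from funext fun t => by ring,
            MeasureTheory.integral_const_mul,
            Real.integral_rpow_mul_exp_neg_mul_Ioi hq0 hb]
        rw [this]
        obtain ⟨m, rfl⟩ : ∃ m, q = m + 1 := ⟨q - 1, (Nat.succ_pred_eq_of_pos hq).symm⟩
        push_cast
        rw [Real.Gamma_nat_eq_factorial m]
        rw [show ((m:ℝ) + 1) = ((m + 1 : ℕ) : ℝ) by push_cast; ring, Real.rpow_natCast,
          Nat.factorial_succ]
        push_cast
        field_simp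
        rw [mul_assoc, ← mul_pow, one_div_mul_cancel hb.ne', one_pow, mul_one]


lemma sum_moment_bound {Ω : Type*} [MeasurableSpace Ω] (μ : Measure Ω)
    (T : ℕ) (X : Fin (T + 1) → Ω → ℝ) (hX : ∀ t, Measurable (X t))
    (A : ℝ) (hA : 1 ≤ A) (B : Fin (T + 1) → ℝ) (hB : ∀ t, 0 < B t)
    (hmom : ∀ t (q : ℕ), 1 ≤ q → ∫⁻ ω, ENNReal.ofReal (|X t ω| ^ (q : ℝ)) ∂μ ≤
      ENNReal.ofReal (A * (Nat.factorial q : ℝ) / B t ^ q))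
    (q : ℕ) (hq : 1 ≤ q) :
    ∫⁻ ω, ENNReal.ofReal (|∑ t, X t ω| ^ (q : ℝ)) ∂μ ≤
      ENNReal.ofReal (A * (Nat.factorial q : ℝ)) * ENNReal.ofReal (∑ t, (B t)⁻¹) ^ q := by
  have hqR : (0:ℝ) < q := by exact_mod_cast hq
  have hq0 : q ≠ 0 := by omega
  have hp0 : (q : ℝ≥0∞) ≠ 0 := by exact_mod_cast hq0
  have hpt : (q : ℝ≥0∞) ≠ ⊤ := ENNReal.natCast_ne_top q
  set a : ℝ≥0∞ := ENNReal.ofReal (A * (Nat.factorial q : ℝ)) with ha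
  have key : ∀ (f : Ω → ℝ), ∫⁻ ω, ENNReal.ofReal (|f ω| ^ (q : ℝ)) ∂μ
      = (eLpNorm f (q : ℝ≥0∞) μ) ^ q := by
    intro f
    rw [eLpNorm_eq_lintegral_rpow_enorm_toReal hp0 hpt, ENNReal.toReal_natCast, one_div,
      ENNReal.rpow_inv_natCast_pow hq0]
    refine lintegral_congr fun ω => ?_
    rw [Real.enorm_eq_ofReal_abs, ENNReal.ofReal_rpow_of_nonneg (abs_nonneg _) hqR.le]
  have hXel : ∀ t, eLpNorm (X t) (q : ℝ≥0∞) μ ≤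
      a ^ ((q:ℝ)⁻¹) * ENNReal.ofReal (B t)⁻¹ := by
    intro t
    have h1 : (eLpNorm (X t) (q : ℝ≥0∞) μ) ^ q ≤ a * ENNReal.ofReal (B t)⁻¹ ^ q := by
      rw [← key]
      calc ∫⁻ ω, ENNReal.ofReal (|X t ω| ^ (q : ℝ)) ∂μ
          ≤ ENNReal.ofReal (A * (Nat.factorial q : ℝ) / B t ^ q) := hmom t q hq
        _ = a * ENNReal.ofReal (B t)⁻¹ ^ q := by
            rw [ha, ← ENNReal.ofReal_pow (inv_nonneg.2 (hB t).le),
              ← ENNReal.ofReal_mul (mul_nonneg (by linarith) (Nat.cast_nonneg _))]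
            congr 1
            field_simp
            rw [one_div_pow]
    calc eLpNorm (X t) (q : ℝ≥0∞) μ
        = ((eLpNorm (X t) (q : ℝ≥0∞) μ) ^ q) ^ ((q:ℝ)⁻¹) := by
          rw [← ENNReal.rpow_natCast _ q, ← ENNReal.rpow_mul,
            mul_inv_cancel₀ (by exact_mod_cast hq0 : (q:ℝ) ≠ 0), ENNReal.rpow_one]
      _ ≤ (a * ENNReal.ofReal (B t)⁻¹ ^ q) ^ ((q:ℝ)⁻¹) :=
          ENNReal.rpow_le_rpow h1 (by positivity)
      _ = a ^ ((q:ℝ)⁻¹) * ENNReal.ofReal (B t)⁻¹ := by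
          rw [ENNReal.mul_rpow_of_nonneg _ _ (by positivity), ← ENNReal.rpow_natCast _ q,
            ← ENNReal.rpow_mul, mul_inv_cancel₀ (by exact_mod_cast hq0 : (q:ℝ) ≠ 0),
            ENNReal.rpow_one]
  calc ∫⁻ ω, ENNReal.ofReal (|∑ t, X t ω| ^ (q : ℝ)) ∂μ
      = (eLpNorm (fun ω => ∑ t, X t ω) (q : ℝ≥0∞) μ) ^ q := key _
    _ ≤ (∑ t, eLpNorm (X t) (q : ℝ≥0∞) μ) ^ q := by
        gcongr
        have := eLpNorm_sum_le (μ := μ) (f := X) (s := Finset.univ)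
          (fun i _ => (hX i).aestronglyMeasurable) (by exact_mod_cast hq : (1:ℝ≥0∞) ≤ (q:ℝ≥0∞))
        calc eLpNorm (fun ω => ∑ t, X t ω) (q : ℝ≥0∞) μ
            = eLpNorm (∑ t, X t) (q : ℝ≥0∞) μ := by
              congr 1; funext ω; simp [Finset.sum_apply]
          _ ≤ _ := this
    _ ≤ (∑ t, a ^ ((q:ℝ)⁻¹) * ENNReal.ofReal (B t)⁻¹) ^ q := by
        gcongr with t
        exact hXel t
    _ = (a ^ ((q:ℝ)⁻¹)) ^ q * (∑ t, ENNReal.ofReal (B t)⁻¹) ^ q := by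
        rw [← Finset.mul_sum, mul_pow]
    _ = a * ENNReal.ofReal (∑ t, (B t)⁻¹) ^ q := by
        rw [ENNReal.rpow_inv_natCast_pow hq0, ENNReal.ofReal_sum_of_nonneg
          (fun t _ => inv_nonneg.2 (hB t).le)]


/-- Sum of exponential-tail random variables: if
`P(|X_t| > ε) ≤ A exp(−B_t ε)` for all `ε > 0`, and `B` is the harmonic mean of the `B_t`,
then `P(|∑ X_t| > ε) ≤ (A/(1−γ)) exp(−γ B ε/(T+1))` for all `0 < γ < 1`, `ε > 0`. -/
theorem sum_exponential_tail
    {Ω : Type*} [MeasurableSpace Ω] (μ : Measure Ω) [IsProbabilityMeasure μ]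
    (T : ℕ) (X : Fin (T + 1) → Ω → ℝ) (hX : ∀ t, Measurable (X t))
    (A : ℝ) (hA : 1 ≤ A) (B : Fin (T + 1) → ℝ) (hB : ∀ t, 0 < B t)
    (htail : ∀ t, ∀ ε : ℝ, 0 < ε →
      μ {ω | ε < |X t ω|} ≤ ENNReal.ofReal (A * Real.exp (-(B t) * ε)))
    (Bh : ℝ) (hBh : Bh = (((T + 1 : ℝ))⁻¹ * ∑ t, (B t)⁻¹)⁻¹)
    (γ ε : ℝ) (hγ0 : 0 < γ) (hγ1 : γ < 1) (hε : 0 < ε) :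
    μ {ω | ε < |∑ t, X t ω|} ≤
      ENNReal.ofReal (A / (1 - γ) * Real.exp (-(γ * Bh * ε) / (T + 1))) := by
  have hA0 : (0:ℝ) ≤ A := by linarith
  have hmom : ∀ t (q : ℕ), 1 ≤ q → ∫⁻ ω, ENNReal.ofReal (|X t ω| ^ (q:ℝ)) ∂μ ≤
      ENNReal.ofReal (A * (Nat.factorial q : ℝ) / B t ^ q) :=
    fun t q hq => moment_from_tail μ (X t) (hX t) A (B t) hA0 (hB t) (htail t) q hq
  set S := fun ω => ∑ t, X t ω with hSdef
  have hS : Measurable S := Finset.measurable_sum Finset.univ (fun t _ => hX t)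
  set R : ℝ := ∑ t, (B t)⁻¹ with hRdef
  have hRpos : 0 < R := Finset.sum_pos (fun t _ => inv_pos.2 (hB t)) Finset.univ_nonempty
  have hT : (0:ℝ) < (T + 1 : ℝ) := by positivity
  have hBhpos : 0 < Bh := by
    rw [hBh]
    exact inv_pos.2 (mul_pos (inv_pos.2 hT) hRpos)
  have hRBh : R = (T + 1) / Bh := by
    have h1 : R ≠ 0 := hRpos.ne'
    have h2 : (T + 1 : ℝ) ≠ 0 := hT.ne'
    rw [hBh, div_eq_mul_inv, inv_inv]
    field_simp
  set l : ℝ := γ * Bh / (T + 1) with hldef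
  have hl : 0 < l := div_pos (mul_pos hγ0 hBhpos) hT
  have hlR : l * R = γ := by
    rw [hldef, hRBh]
    field_simp
  set c : ℝ≥0∞ := ENNReal.ofReal (Real.exp (l * ε)) with hc
  have hc0 : c ≠ 0 := (ENNReal.ofReal_pos.2 (Real.exp_pos _)).ne'
  have hctop : c ≠ ⊤ := ENNReal.ofReal_ne_top
  have hmeasf : Measurable fun ω => ENNReal.ofReal (Real.exp (l * |S ω|)) :=
    (Real.measurable_exp.comp (measurable_const.mul hS.abs)).ennreal_ofReal
  -- Chernoff / Markov step
  have step1 : μ {ω | ε < |S ω|} ≤ c⁻¹ * ∫⁻ ω, ENNReal.ofReal (Real.exp (l * |S ω|)) ∂μ := by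
    have hsub : {ω | ε < |S ω|} ⊆ {ω | c ≤ ENNReal.ofReal (Real.exp (l * |S ω|))} := by
      intro ω hω
      exact ENNReal.ofReal_le_ofReal (Real.exp_le_exp.2
        (mul_le_mul_of_nonneg_left (le_of_lt hω) hl.le))
    calc μ {ω | ε < |S ω|} ≤ μ {ω | c ≤ ENNReal.ofReal (Real.exp (l * |S ω|))} :=
          measure_mono hsub
      _ = c⁻¹ * (c * μ {ω | c ≤ ENNReal.ofReal (Real.exp (l * |S ω|))}) := by
          rw [← mul_assoc, ENNReal.inv_mul_cancel hc0 hctop, one_mul]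
      _ ≤ c⁻¹ * ∫⁻ ω, ENNReal.ofReal (Real.exp (l * |S ω|)) ∂μ := by
          gcongr
          exact mul_meas_ge_le_lintegral₀ hmeasf.aemeasurable c
  -- moment bounds with natural-number powers
  have hMn : ∀ n : ℕ, ∫⁻ ω, ENNReal.ofReal (|S ω| ^ n) ∂μ ≤
      ENNReal.ofReal (A * (Nat.factorial n : ℝ)) * ENNReal.ofReal R ^ n := by
    intro n
    rcases Nat.eq_zero_or_pos n with h0 | h1
    · subst h0
      simp only [pow_zero, ENNReal.ofReal_one, lintegral_one, measure_univ, Nat.factorial_zero,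
        Nat.cast_one, mul_one]
      exact le_trans (ENNReal.one_le_ofReal.2 hA) le_rfl
    · have h := sum_moment_bound μ T X hX A hA B hB hmom n h1
      have heq : ∀ ω, ENNReal.ofReal (|S ω| ^ n) = ENNReal.ofReal (|S ω| ^ (n:ℝ)) := fun ω => by
        rw [Real.rpow_natCast]
      calc ∫⁻ ω, ENNReal.ofReal (|S ω| ^ n) ∂μ
          = ∫⁻ ω, ENNReal.ofReal (|S ω| ^ (n:ℝ)) ∂μ := lintegral_congr heq
        _ ≤ _ := h
  -- expand the exponential as a series and bound
  have step2 : ∫⁻ ω, ENNReal.ofReal (Real.exp (l * |S ω|)) ∂μ ≤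
      ENNReal.ofReal (A * (1 - γ)⁻¹) := by
    have hexp : ∀ ω, ENNReal.ofReal (Real.exp (l * |S ω|)) =
        ∑' n : ℕ, ENNReal.ofReal ((l * |S ω|) ^ n / (Nat.factorial n : ℝ)) := by
      intro ω
      rw [Real.exp_eq_exp_ℝ, NormedSpace.exp_eq_tsum_div]
      exact ENNReal.ofReal_tsum_of_nonneg (fun n => by positivity)
        (Real.summable_pow_div_factorial _)
    have hterm : ∀ (n : ℕ) ω, ENNReal.ofReal ((l * |S ω|) ^ n / (Nat.factorial n : ℝ)) =
        ENNReal.ofReal (l ^ n / (Nat.factorial n : ℝ)) * ENNReal.ofReal (|S ω| ^ n) := by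
      intro n ω
      rw [← ENNReal.ofReal_mul (by positivity)]
      congr 1
      rw [mul_pow]
      ring
    calc ∫⁻ ω, ENNReal.ofReal (Real.exp (l * |S ω|)) ∂μ
        = ∫⁻ ω, ∑' n : ℕ, ENNReal.ofReal (l ^ n / (Nat.factorial n : ℝ)) *
            ENNReal.ofReal (|S ω| ^ n) ∂μ := by
          refine lintegral_congr fun ω => ?_
          rw [hexp ω]
          exact tsum_congr fun n => hterm n ω
      _ = ∑' n : ℕ, ∫⁻ ω, ENNReal.ofReal (l ^ n / (Nat.factorial n : ℝ)) *
            ENNReal.ofReal (|S ω| ^ n) ∂μ := by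
          refine lintegral_tsum fun n => ?_
          exact (measurable_const.mul ((hS.abs.pow_const n).ennreal_ofReal)).aemeasurable
      _ = ∑' n : ℕ, ENNReal.ofReal (l ^ n / (Nat.factorial n : ℝ)) *
            ∫⁻ ω, ENNReal.ofReal (|S ω| ^ n) ∂μ := by
          refine tsum_congr fun n => ?_
          exact lintegral_const_mul' _ _ ENNReal.ofReal_ne_top
      _ ≤ ∑' n : ℕ, ENNReal.ofReal (l ^ n / (Nat.factorial n : ℝ)) *
            (ENNReal.ofReal (A * (Nat.factorial n : ℝ)) * ENNReal.ofReal R ^ n) := by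
          gcongr with n
          exact hMn n
      _ = ∑' n : ℕ, ENNReal.ofReal (A * γ ^ n) := by
          refine tsum_congr fun n => ?_
          rw [← ENNReal.ofReal_pow hRpos.le, ← ENNReal.ofReal_mul (by
            exact mul_nonneg hA0 (Nat.cast_nonneg _)), ← ENNReal.ofReal_mul (by positivity)]
          congr 1
          have hfact : (0:ℝ) < (Nat.factorial n : ℝ) := by
            exact_mod_cast Nat.factorial_pos n
          rw [← hlR, mul_pow]
          field_simp
      _ = ENNReal.ofReal (∑' n : ℕ, A * γ ^ n) := by
          exact (ENNReal.ofReal_tsum_of_nonneg (fun n => by positivity)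
            ((summable_geometric_of_lt_one hγ0.le hγ1).mul_left A)).symm
      _ = ENNReal.ofReal (A * (1 - γ)⁻¹) := by
          rw [tsum_mul_left, tsum_geometric_of_lt_one hγ0.le hγ1]
  -- combine
  calc μ {ω | ε < |S ω|} ≤ c⁻¹ * ∫⁻ ω, ENNReal.ofReal (Real.exp (l * |S ω|)) ∂μ := step1
    _ ≤ c⁻¹ * ENNReal.ofReal (A * (1 - γ)⁻¹) := by gcongr
    _ = ENNReal.ofReal (A / (1 - γ) * Real.exp (-(γ * Bh * ε) / (T + 1))) := by
        rw [hc, ← ENNReal.ofReal_inv_of_pos (Real.exp_pos _), ← Real.exp_neg,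
          ← ENNReal.ofReal_mul (Real.exp_pos _).le]
        congr 1
        rw [show -(l * ε) = -(γ * Bh * ε) / (T + 1) by rw [hldef]; ring]
        rw [div_eq_mul_inv]
        ring
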